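/- If Z ~ AbSLG(α,β), then E(Z³) = -(98π⁴α + 310π⁶β)/(210 + 35π²α² + 98π⁴αβ + 155π⁶β²) · 105/105, i.e., E(Z³) = -105(98π⁴α + 310π⁶β)/(105(210 + 35π²α² + 98π⁴αβ + 155π⁶β²)) = -(98π⁴α + 310π⁶β)/(210 + 35π²α² + 98π⁴αβ + 155π⁶β²). -/

import Mathlib

open Real MeasureTheory Filter

noncomputable def C (α β : ℝ) : ℝ :=
  (210 + 35 * π ^ 2 * α ^ 2 + 98 * π ^ 4 * α * β + 155 * π ^ 6 * β ^ 2) / 105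

noncomputable def g (z : ℝ) : ℝ := Real.exp (-z) / (1 + Real.exp (-z)) ^ 2

open Set Asymptotics


lemma g_even (z : ℝ) : g (-z) = g z := by
  unfold g
  rw [neg_neg, Real.exp_neg]
  have hu : (0:ℝ) < Real.exp z := Real.exp_pos z
  rw [div_eq_div_iff (by positivity) (by positivity)]
  field_simp
  ring

lemma g_nonneg (z : ℝ) : 0 ≤ g z := by unfold g; positivity

lemma g_le (z : ℝ) : g z ≤ Real.exp (-z) := by
  unfold g
  rw [div_le_iff₀ (by positivity)]
  nlinarith [Real.exp_pos (-z), sq_nonneg (Real.exp (-z))]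

lemma g_cont : Continuous g := by
  apply Continuous.div
  · exact Real.continuous_exp.comp continuous_neg
  · exact (continuous_const.add (Real.continuous_exp.comp continuous_neg)).pow 2
  · intro z; positivity

lemma g_abs (x : ℝ) : g |x| = g x := by
  rcases abs_choice x with h | h
  · rw [h]
  · rw [h, g_even]

lemma tendsto_aux (k : ℕ) {c : ℝ} (hc : 0 < c) :
    Tendsto (fun x : ℝ => x ^ k * Real.exp (-(c * x))) atTop (nhds 0) := by
  have h := (tendsto_pow_mul_exp_neg_atTop_nhds_zero k).comp
    (tendsto_id.const_mul_atTop hc)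
  have h2 := h.div_const (c ^ k)
  rw [zero_div] at h2
  refine h2.congr (fun x => ?_)
  simp only [Function.comp, mul_pow, id]
  field_simp

lemma base_isBigO (k : ℕ) {r : ℝ} (hr : 0 < r) :
    (fun z : ℝ => z ^ k * Real.exp (-(r * z))) =O[atTop] fun z => Real.exp (-(r/2) * z) := by
  have h1 : (fun z : ℝ => z ^ k * Real.exp (-(r/2 * z))) =O[atTop] (fun _ => (1:ℝ)) :=
    (tendsto_aux k (half_pos hr)).isBigO_one ℝ
  have h2 := h1.mul (isBigO_refl (fun z : ℝ => Real.exp (-(r/2) * z)) atTop)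
  refine h2.congr (fun x => ?_) (fun x => one_mul _)
  rw [mul_assoc, ← Real.exp_add]
  congr 2
  ring

lemma base_integrableOn (k : ℕ) {r : ℝ} (hr : 0 < r) :
    IntegrableOn (fun z : ℝ => z ^ k * Real.exp (-(r * z))) (Set.Ioi 0) := by
  exact integrable_of_isBigO_exp_neg (half_pos hr)
    (Continuous.continuousOn (by continuity)) (base_isBigO k hr)

lemma base_integral (k : ℕ) {r : ℝ} (hr : 0 < r) :
    ∫ z in Set.Ioi (0:ℝ), z ^ k * Real.exp (-(r * z)) = k.factorial / r ^ (k + 1) := by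
  have h := integral_rpow_mul_exp_neg_mul_Ioi (a := (k:ℝ) + 1) (by positivity) hr
  rw [add_sub_cancel_right] at h
  have hcongr : ∫ z in Set.Ioi (0:ℝ), z ^ k * Real.exp (-(r * z))
      = ∫ t in Set.Ioi (0:ℝ), t ^ ((k:ℝ)) * Real.exp (-(r * t)) :=
    setIntegral_congr_fun measurableSet_Ioi (fun x hx => by rw [Real.rpow_natCast])
  rw [hcongr, h, Real.Gamma_nat_eq_factorial k,
    show ((k:ℝ) + 1) = ((k+1 : ℕ) : ℝ) by push_cast; ring, Real.rpow_natCast, div_pow, one_pow]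
  ring

lemma g_hasSum {z : ℝ} (hz : 0 < z) :
    HasSum (fun n : ℕ => (-1:ℝ) ^ (n+1) * n * Real.exp (-((n:ℝ) * z))) (g z) := by
  set x := Real.exp (-z) with hx
  have hx0 : 0 < x := Real.exp_pos _
  have hx1 : x < 1 := by
    rw [hx, Real.exp_lt_one_iff]
    linarith
  have hnorm : ‖-x‖ < 1 := by
    rw [norm_neg, Real.norm_eq_abs, abs_of_pos hx0]; exact hx1
  have h := (hasSum_coe_mul_geometric_of_norm_lt_one hnorm).neg
  have hval : -((-x) / (1 - -x) ^ 2) = g z := by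
    unfold g
    rw [← hx, sub_neg_eq_add, neg_div, neg_neg]
  rw [hval] at h
  refine h.congr_fun fun n => ?_
  have he : Real.exp (-((n:ℝ)*z)) = x ^ n := by
    rw [hx, ← Real.exp_nat_mul]; congr 1; ring
  rw [he, neg_pow, pow_succ]
  ring

lemma eta_hasSum (k : ℕ) (hk : k ≠ 0) (S : ℝ)
    (hS : HasSum (fun n : ℕ => 1 / (n:ℝ) ^ k) S) :
    HasSum (fun n : ℕ => (-1:ℝ) ^ (n+1) / (n:ℝ) ^ k) (S - 2 * (S / 2 ^ k)) := by
  classical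
  have hinj : Function.Injective (fun n : ℕ => 2 * n) := fun a b h => by simp only [] at h; omega
  have heven : HasSum (fun n : ℕ => if 2 ∣ n then 1 / (n:ℝ) ^ k else 0) (S / 2 ^ k) := by
    rw [← Function.Injective.hasSum_iff hinj (fun x hx => by
      rw [if_neg]
      intro ⟨m, hm⟩
      exact hx ⟨m, hm.symm⟩)]
    have h2 := hS.div_const ((2:ℝ) ^ k)
    refine h2.congr_fun fun n => ?_
    simp only [Function.comp]
    rw [if_pos ⟨n, rfl⟩]
    push_cast
    rw [mul_pow]
    rcases eq_or_ne (n:ℝ) 0 with hn | hn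
    · rw [hn, zero_pow hk, mul_zero, div_zero, zero_div]
    · field_simp
  have halt : ∀ n : ℕ, (-1:ℝ) ^ (n+1) / (n:ℝ) ^ k
      = 1 / (n:ℝ) ^ k - 2 * (if 2 ∣ n then 1 / (n:ℝ) ^ k else 0) := by
    intro n
    rcases Nat.even_or_odd n with he | ho
    · rw [if_pos he.two_dvd, Odd.neg_one_pow (Even.add_one he)]
      ring
    · rw [if_neg (by rcases ho with ⟨m, rfl⟩; omega), Even.neg_one_pow (Odd.add_one ho)]
      ring
  have := hS.sub (heven.mul_left 2)
  exact this.congr_fun halt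

lemma bernoulli'_five : bernoulli' 5 = 0 := by
  have h42 : Nat.choose 5 2 = 10 := by decide
  have h43 : Nat.choose 5 3 = 10 := by decide
  have h44 : Nat.choose 5 4 = 5 := by decide
  rw [bernoulli'_def]
  norm_num [Finset.sum_range_succ, Finset.sum_range_zero, h42, h43, h44,
    bernoulli'_two, bernoulli'_three, bernoulli'_four]

lemma bernoulli'_six : bernoulli' 6 = 1 / 42 := by
  have h2 : Nat.choose 6 2 = 15 := by decide
  have h3 : Nat.choose 6 3 = 20 := by decide
  have h4 : Nat.choose 6 4 = 15 := by decide
  have h5 : Nat.choose 6 5 = 6 := by decide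
  rw [bernoulli'_def]
  norm_num [Finset.sum_range_succ, Finset.sum_range_zero, h2, h3, h4, h5,
    bernoulli'_two, bernoulli'_three, bernoulli'_four, bernoulli'_five]

lemma hasSum_zeta_six : HasSum (fun n : ℕ => (1:ℝ) / (n:ℝ) ^ 6) (π ^ 6 / 945) := by
  convert hasSum_zeta_nat (k := 3) (by norm_num) using 1
  rw [bernoulli_eq_bernoulli'_of_ne_one (by norm_num), bernoulli'_six]
  push_cast
  norm_num [Nat.factorial]
  ring
open Asymptotics in
lemma moment_Ioi (k : ℕ) (hk : 2 ≤ k) (S : ℝ)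
    (hS : HasSum (fun n : ℕ => 1 / (n:ℝ) ^ k) S) :
    ∫ z in Set.Ioi (0:ℝ), z ^ k * g z = k.factorial * (S - 2 * (S / 2 ^ k)) := by
  classical
  set F : ℕ → ℝ → ℝ := fun n z => z ^ k * ((-1:ℝ) ^ (n+1) * n * Real.exp (-((n:ℝ) * z)))
    with hF
  have hF_int : ∀ n, Integrable (F n) (volume.restrict (Set.Ioi 0)) := by
    intro n
    rcases Nat.eq_zero_or_pos n with rfl | hn
    · simp [hF]
    · have h := (base_integrableOn k (r := (n:ℝ)) (by exact_mod_cast hn)).const_mul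
        ((-1:ℝ) ^ (n+1) * n)
      exact h.congr (Filter.Eventually.of_forall fun z => by simp only [hF]; ring)
  have hnorm : ∀ n : ℕ, 1 ≤ n → ∫ z in Set.Ioi (0:ℝ), ‖F n z‖
      = (k.factorial : ℝ) / (n:ℝ) ^ k := by
    intro n hn
    have hn' : (0:ℝ) < n := by exact_mod_cast hn
    have hcg : ∫ z in Set.Ioi (0:ℝ), ‖F n z‖
        = ∫ z in Set.Ioi (0:ℝ), (n:ℝ) * (z ^ k * Real.exp (-((n:ℝ) * z))) := by
      refine setIntegral_congr_fun measurableSet_Ioi (fun z hz => ?_)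
      simp only [hF, Real.norm_eq_abs, abs_mul, abs_pow, abs_neg, abs_one, one_pow, one_mul,
        Nat.abs_cast, abs_of_nonneg (Real.exp_pos (-((n:ℝ) * z))).le,
        abs_of_nonneg (le_of_lt (show (0:ℝ) < z from hz))]
      ring
    rw [hcg, integral_const_mul, base_integral k hn']
    rw [pow_succ]
    field_simp
  have hsum : Summable fun n : ℕ => ∫ z in Set.Ioi (0:ℝ), ‖F n z‖ := by
    have hs : Summable fun n : ℕ => (k.factorial : ℝ) * (1 / (n:ℝ) ^ k) := by
      exact (Real.summable_one_div_nat_pow.mpr (by omega)).mul_left _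
    refine Summable.of_nonneg_of_le (fun n => ?_) (fun n => ?_) hs
    · exact integral_nonneg fun z => norm_nonneg _
    · rcases Nat.eq_zero_or_pos n with rfl | hn
      · simp [hF]
        positivity
      · rw [hnorm n hn]
        rw [mul_one_div]
  have hexch := MeasureTheory.integral_tsum_of_summable_integral_norm hF_int hsum
  have hright : ∫ z in Set.Ioi (0:ℝ), (∑' n, F n z) = ∫ z in Set.Ioi (0:ℝ), z ^ k * g z := by
    refine setIntegral_congr_fun measurableSet_Ioi (fun z hz => ?_)
    exact (((g_hasSum hz).mul_left (z ^ k)).tsum_eq)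
  have hleft : ∀ n : ℕ, (∫ z in Set.Ioi (0:ℝ), F n z)
      = (k.factorial : ℝ) * ((-1:ℝ) ^ (n+1) / (n:ℝ) ^ k) := by
    intro n
    rcases Nat.eq_zero_or_pos n with rfl | hn
    · simp [hF, zero_pow (show k ≠ 0 by omega)]
    · have hn' : (0:ℝ) < n := by exact_mod_cast hn
      have hcg : ∫ z in Set.Ioi (0:ℝ), F n z
          = ∫ z in Set.Ioi (0:ℝ), ((-1:ℝ) ^ (n+1) * n) * (z ^ k * Real.exp (-((n:ℝ) * z))) := by
        refine setIntegral_congr_fun measurableSet_Ioi (fun z hz => ?_)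
        simp only [hF]; ring
      rw [hcg, integral_const_mul, base_integral k hn', pow_succ]
      field_simp
      ring
  have heta := (eta_hasSum k (by omega) S hS).mul_left (k.factorial : ℝ)
  have : ∑' n, (∫ z in Set.Ioi (0:ℝ), F n z) = (k.factorial : ℝ) * (S - 2 * (S / 2 ^ k)) := by
    rw [tsum_congr hleft]
    exact heta.tsum_eq
  rw [← hright, ← hexch, this]

lemma integrable_pow_g (n : ℕ) : Integrable (fun z : ℝ => z ^ n * g z) := by
  have hc : Continuous fun z : ℝ => z ^ n * g z := (continuous_pow n).mul g_cont
  have hIoi : IntegrableOn (fun z : ℝ => z ^ n * g z) (Set.Ioi 0) := by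
    refine Integrable.mono' (base_integrableOn n one_pos) hc.aestronglyMeasurable ?_
    rw [ae_restrict_iff' measurableSet_Ioi]
    refine Filter.Eventually.of_forall fun z hz => ?_
    rw [Real.norm_eq_abs, abs_mul, abs_pow, abs_of_nonneg (le_of_lt (show (0:ℝ) < z from hz)),
      abs_of_nonneg (g_nonneg z), one_mul]
    exact mul_le_mul_of_nonneg_left (g_le z) (pow_nonneg (le_of_lt hz) n)
  have hIic : IntegrableOn (fun z : ℝ => z ^ n * g z) (Set.Iic 0) := by
    rw [← Measure.map_neg_eq_self (volume : Measure ℝ)]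
    have m : MeasurableEmbedding fun x : ℝ => -x := (Homeomorph.neg ℝ).measurableEmbedding
    rw [m.integrableOn_map_iff]
    simp_rw [Function.comp_def, Set.neg_preimage, Set.neg_Iic, neg_zero]
    have heq : (fun x : ℝ => (-x) ^ n * g (-x)) = fun x : ℝ => (-1:ℝ) ^ n * (x ^ n * g x) := by
      funext x; rw [g_even, neg_pow]; ring
    rw [heq]
    exact ((integrableOn_Ici_iff_integrableOn_Ioi).mpr hIoi).const_mul _
  have := hIic.union hIoi
  rwa [Set.Iic_union_Ioi, integrableOn_univ] at this

lemma moment_odd (k : ℕ) (hk : Odd k) : ∫ z : ℝ, z ^ k * g z = 0 := by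
  have h := MeasureTheory.integral_neg_eq_self (fun z : ℝ => z ^ k * g z) volume
  have h2 : ∫ z : ℝ, (-z) ^ k * g (-z) = - ∫ z : ℝ, z ^ k * g z := by
    rw [← integral_neg]
    congr 1
    funext z
    rw [g_even, hk.neg_pow]
    ring
  rw [h2] at h
  linarith

lemma moment_even (k : ℕ) (hk : Even k) :
    ∫ z : ℝ, z ^ k * g z = 2 * ∫ z in Set.Ioi (0:ℝ), z ^ k * g z := by
  rw [← integral_comp_abs (f := fun z : ℝ => z ^ k * g z)]
  congr 1
  funext z
  rw [g_abs, hk.pow_abs]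

lemma moment_four : ∫ z : ℝ, z ^ 4 * g z = 7 * π ^ 4 / 15 := by
  rw [moment_even 4 ⟨2, rfl⟩, moment_Ioi 4 (by norm_num) _ hasSum_zeta_four]
  norm_num [Nat.factorial]
  ring

lemma moment_six : ∫ z : ℝ, z ^ 6 * g z = 31 * π ^ 6 / 21 := by
  rw [moment_even 6 ⟨3, rfl⟩, moment_Ioi 6 (by norm_num) _ hasSum_zeta_six]
  norm_num [Nat.factorial]
  ring


noncomputable def f (z α β : ℝ) : ℝ := ((1 - α * z - β * z ^ 3) ^ 2 + 1) / C α β * g z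

theorem stmt15 (α β : ℝ) :
    ∫ z : ℝ, z ^ 3 * f z α β =
      -(98 * π ^ 4 * α + 310 * π ^ 6 * β) /
        (210 + 35 * π ^ 2 * α ^ 2 + 98 * π ^ 4 * α * β + 155 * π ^ 6 * β ^ 2) := by
  have hπ := Real.pi_pos
  have hD : 0 < 210 + 35 * π ^ 2 * α ^ 2 + 98 * π ^ 4 * α * β + 155 * π ^ 6 * β ^ 2 := by
    nlinarith [sq_nonneg (35 * π * α + 49 * π ^ 3 * β), sq_nonneg (π * α), sq_nonneg (π ^ 3 * β),
      sq_nonneg π, pow_pos hπ 2, pow_pos hπ 6]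
  have hfun : (fun z : ℝ => z ^ 3 * f z α β) = fun z : ℝ =>
      (C α β)⁻¹ * ((2 * (z ^ 3 * g z) - (2 * α) * (z ^ 4 * g z) + α ^ 2 * (z ^ 5 * g z)
        - (2 * β) * (z ^ 6 * g z) + (2 * α * β) * (z ^ 7 * g z)) + β ^ 2 * (z ^ 9 * g z)) := by
    funext z
    unfold f
    rw [div_eq_mul_inv]
    ring
  have h3 := (integrable_pow_g 3).const_mul (2:ℝ)
  have h4 := (integrable_pow_g 4).const_mul (2*α)
  have h5 := (integrable_pow_g 5).const_mul (α^2)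
  have h6 := (integrable_pow_g 6).const_mul (2*β)
  have h7 := (integrable_pow_g 7).const_mul (2*α*β)
  have h9 := (integrable_pow_g 9).const_mul (β^2)
  have hA2 : Integrable (fun a : ℝ => 2 * (a ^ 3 * g a) - 2 * α * (a ^ 4 * g a)) volume :=
    h3.sub h4
  have hA3 : Integrable (fun a : ℝ => 2 * (a ^ 3 * g a) - 2 * α * (a ^ 4 * g a)
      + α ^ 2 * (a ^ 5 * g a)) volume := hA2.add h5
  have hA4 : Integrable (fun a : ℝ => 2 * (a ^ 3 * g a) - 2 * α * (a ^ 4 * g a)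
      + α ^ 2 * (a ^ 5 * g a) - 2 * β * (a ^ 6 * g a)) volume := hA3.sub h6
  have hA5 : Integrable (fun a : ℝ => 2 * (a ^ 3 * g a) - 2 * α * (a ^ 4 * g a)
      + α ^ 2 * (a ^ 5 * g a) - 2 * β * (a ^ 6 * g a) + 2 * α * β * (a ^ 7 * g a)) volume :=
    hA4.add h7
  rw [hfun, integral_const_mul,
    integral_add hA5 h9,
    integral_add hA4 h7,
    integral_sub hA3 h6,
    integral_add hA2 h5,
    integral_sub h3 h4,
    integral_const_mul, integral_const_mul, integral_const_mul, integral_const_mul,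
    integral_const_mul, integral_const_mul,
    moment_odd 3 ⟨1, rfl⟩, moment_odd 5 ⟨2, rfl⟩, moment_odd 7 ⟨3, rfl⟩, moment_odd 9 ⟨4, rfl⟩,
    moment_four, moment_six]
  unfold C
  rw [mul_zero, mul_zero, mul_zero, mul_zero]
  field_simp
  ring
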